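/- Let m_{i,t} ∈ [0,1] for i ∈ [n], t ≥ 1, and define ŝ_{i,1} = 0 and ŝ_{i,t+1} = ŝ_{i,t}(1 - m_{i,t}) + m_{i,t}. Suppose events (E_{i,t}) satisfy: E_{i,1} never occurs; at each time step t at most one additional i can switch from not-engaged to engaged; and conditioned on any history with i not engaged at time t, the probability i becomes engaged at step t is at most m_{i,t}. Then for every t and every S ⊆ [n], P[⋂_{i∈S} E_{i,t}] ≤ ∏_{i∈S} ŝ_{i,t}. -/

import Mathlib

open scoped Classical

theorem stmt18 {Ω ι : Type*} [Fintype Ω] [DecidableEq ι]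
    (μ : Ω → ℝ) (hμ0 : ∀ ω, 0 ≤ μ ω) (hμ1 : ∑ ω, μ ω = 1)
    (E : ι → ℕ → Set Ω) (m : ι → ℕ → ℝ) (hm : ∀ i t, m i t ∈ Set.Icc (0:ℝ) 1)
    (shat : ι → ℕ → ℝ)
    (hshat1 : ∀ i, shat i 1 = 0)
    (hshatrec : ∀ i t, 1 ≤ t → shat i (t + 1) = shat i t * (1 - m i t) + m i t)
    (hmono : ∀ i t, E i t ⊆ E i (t + 1))
    (hinit : ∀ i, E i 1 = ∅)
    (honce : ∀ (ω : Ω) (t : ℕ) (i j : ι), ω ∈ E i (t + 1) → ω ∉ E i t →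
      ω ∈ E j (t + 1) → ω ∉ E j t → i = j)
    (hcond : ∀ (t : ℕ) (i : ι) (Hst : Set Ω),
      (MeasurableSpace.generateFrom {A | ∃ j t', t' ≤ t ∧ A = E j t'}).MeasurableSet' Hst →
      Hst ⊆ (E i t)ᶜ →
      (∑ ω, if ω ∈ Hst ∩ E i (t + 1) then μ ω else 0)
        ≤ m i t * ∑ ω, if ω ∈ Hst then μ ω else 0) :
    ∀ t, 1 ≤ t → ∀ S : Finset ι,
      (∑ ω, if ∀ i ∈ S, ω ∈ E i t then μ ω else 0) ≤ ∏ i ∈ S, shat i t := by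
  classical
  have hm0 : ∀ i t, 0 ≤ m i t := fun i t => (hm i t).1
  have hm1 : ∀ i t, m i t ≤ 1 := fun i t => (hm i t).2
  have Pnn : ∀ X : Set Ω, (0:ℝ) ≤ ∑ ω, X.indicator μ ω :=
    fun X => Finset.sum_nonneg fun ω _ => Set.indicator_nonneg (fun a _ => hμ0 a) ω
  have memI : ∀ (A : Finset ι) (u : ℕ) (ω : Ω),
      ω ∈ (⋂ i ∈ A, E i u) ↔ ∀ i ∈ A, ω ∈ E i u := fun A u ω => Set.mem_iInter₂
  have bridge : ∀ (A : Finset ι) (u : ℕ),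
      (∑ ω, if ∀ i ∈ A, ω ∈ E i u then μ ω else 0)
        = ∑ ω, (⋂ i ∈ A, E i u).indicator μ ω := by
    intro A u
    refine Finset.sum_congr rfl fun ω _ => ?_
    by_cases h : ∀ i ∈ A, ω ∈ E i u
    · rw [if_pos h, Set.indicator_of_mem ((memI A u ω).2 h)]
    · rw [if_neg h, Set.indicator_of_notMem (fun hc => h ((memI A u ω).1 hc))]
  intro t ht
  induction t, ht using Nat.le_induction with
  | base =>
    intro S
    rcases S.eq_empty_or_nonempty with rfl | ⟨j, hj⟩
    · simp [hμ1]
    · have h0 : ∀ ω : Ω, ¬ (∀ i ∈ S, ω ∈ E i 1) := by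
        intro ω h
        have := h j hj
        rw [hinit j] at this
        exact this
      rw [Finset.sum_eq_zero (fun ω _ => by rw [if_neg (h0 ω)])]
      exact Finset.prod_nonneg fun i _ => le_of_eq (hshat1 i).symm
  | succ t ht IH =>
    intro S
    rw [bridge]
    -- step B : decompose
    have decomp : (∑ ω, (⋂ i ∈ S, E i (t+1)).indicator μ ω)
        = (∑ ω, (⋂ i ∈ S, E i t).indicator μ ω)
          + ∑ j ∈ S, ∑ ω,
              (((⋂ i ∈ S.erase j, E i t) ∩ (E j t)ᶜ) ∩ E j (t+1)).indicator μ ω := by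
      rw [Finset.sum_comm, ← Finset.sum_add_distrib]
      refine Finset.sum_congr rfl fun ω _ => ?_
      by_cases h1 : ω ∈ ⋂ i ∈ S, E i (t+1)
      · by_cases h2 : ω ∈ ⋂ i ∈ S, E i t
        · rw [Set.indicator_of_mem h1, Set.indicator_of_mem h2, Finset.sum_eq_zero, add_zero]
          intro j hj
          rw [Set.indicator_of_notMem]
          intro hmem
          exact hmem.1.2 ((memI S t ω).1 h2 j hj)
        · have hex : ∃ j ∈ S, ω ∉ E j t := by
            by_contra hc
            push_neg at hc
            exact h2 ((memI S t ω).2 hc)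
          obtain ⟨j, hjS, hjn⟩ := hex
          have hr : ∀ i ∈ S, i ≠ j → ω ∈ E i t := by
            intro i hi hij
            by_contra hin
            exact hij (honce ω t i j ((memI S (t+1) ω).1 h1 i hi) hin
              ((memI S (t+1) ω).1 h1 j hjS) hjn)
          rw [Set.indicator_of_mem h1, Set.indicator_of_notMem h2, zero_add]
          rw [Finset.sum_eq_single j]
          · rw [Set.indicator_of_mem]
            refine ⟨⟨?_, hjn⟩, (memI S (t+1) ω).1 h1 j hjS⟩
            exact (memI _ t ω).2 fun i hi =>
              hr i (Finset.mem_of_mem_erase hi) (Finset.ne_of_mem_erase hi)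
          · intro k hk hkj
            rw [Set.indicator_of_notMem]
            intro hmem
            exact hmem.1.2 (hr k hk hkj)
          · intro h
            exact absurd hjS h
      · have h2 : ω ∉ ⋂ i ∈ S, E i t := by
          intro h
          exact h1 ((memI S (t+1) ω).2 fun i hi => hmono i t ((memI S t ω).1 h i hi))
        rw [Set.indicator_of_notMem h1, Set.indicator_of_notMem h2, zero_add,
          Finset.sum_eq_zero]
        intro j hj
        rw [Set.indicator_of_notMem]
        intro hmem
        apply h1
        refine (memI S (t+1) ω).2 fun k hk => ?_
        by_cases hkj : k = j
        · subst hkj; exact hmem.2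
        · exact hmono k t ((memI _ t ω).1 hmem.1.1 k (Finset.mem_erase.2 ⟨hkj, hk⟩))
    -- step C : conditional bound
    have condj : ∀ j ∈ S,
        (∑ ω, (((⋂ i ∈ S.erase j, E i t) ∩ (E j t)ᶜ) ∩ E j (t+1)).indicator μ ω)
          ≤ m j t * ∑ ω, ((⋂ i ∈ S.erase j, E i t) ∩ (E j t)ᶜ).indicator μ ω := by
      intro j hj
      have hmeas : (MeasurableSpace.generateFrom
          {A : Set Ω | ∃ j t', t' ≤ t ∧ A = E j t'}).MeasurableSet'
          ((⋂ i ∈ S.erase j, E i t) ∩ (E j t)ᶜ) := by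
        letI := MeasurableSpace.generateFrom {A : Set Ω | ∃ j t', t' ≤ t ∧ A = E j t'}
        show MeasurableSet _
        have hbasic : ∀ (k : ι), MeasurableSet (E k t) := fun k =>
          MeasurableSpace.measurableSet_generateFrom ⟨k, t, le_rfl, rfl⟩
        exact (Finset.measurableSet_biInter (S.erase j) fun i _ => hbasic i).inter
          (hbasic j).compl
      have h := hcond t j ((⋂ i ∈ S.erase j, E i t) ∩ (E j t)ᶜ) hmeas Set.inter_subset_right
      refine le_trans (le_of_eq ?_) (h.trans (le_of_eq ?_))
      · refine Finset.sum_congr rfl fun ω _ => ?_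
        by_cases hω : ω ∈ ((⋂ i ∈ S.erase j, E i t) ∩ (E j t)ᶜ) ∩ E j (t + 1)
        · rw [Set.indicator_of_mem hω, if_pos hω]
        · rw [Set.indicator_of_notMem hω, if_neg hω]
      · refine congrArg (fun x => m j t * x) (Finset.sum_congr rfl fun ω _ => ?_)
        by_cases hω : ω ∈ (⋂ i ∈ S.erase j, E i t) ∩ (E j t)ᶜ
        · rw [Set.indicator_of_mem hω, if_pos hω]
        · rw [Set.indicator_of_notMem hω, if_neg hω]
    -- step D : extend to all subsets
    have hRS : ((⋂ i ∈ S, E i t) ∩ ⋂ i ∈ (S \ S : Finset ι), (E i t)ᶜ)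
        = ⋂ i ∈ S, E i t := by
      rw [Finset.sdiff_self]
      simp
    have hRerase : ∀ j ∈ S,
        ((⋂ i ∈ S.erase j, E i t) ∩ ⋂ i ∈ (S \ S.erase j : Finset ι), (E i t)ᶜ)
          = (⋂ i ∈ S.erase j, E i t) ∩ (E j t)ᶜ := by
      intro j hj
      rw [Finset.sdiff_erase_self hj]
      simp
    have hmerase : ∀ j ∈ S, (∏ i ∈ S \ S.erase j, m i t) = m j t := by
      intro j hj
      rw [Finset.sdiff_erase_self hj, Finset.prod_singleton]
    have hSnotmem : S ∉ S.image S.erase := by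
      intro h
      obtain ⟨j, hj, hje⟩ := Finset.mem_image.1 h
      have : j ∈ S.erase j := by rw [hje]; exact hj
      exact Finset.notMem_erase j S this
    have hinj : ∀ x ∈ S, ∀ y ∈ S, S.erase x = S.erase y → x = y := by
      intro x hx y hy h
      by_contra hxy
      have hx' : x ∈ S.erase y := Finset.mem_erase.2 ⟨hxy, hx⟩
      rw [← h] at hx'
      exact Finset.notMem_erase x S hx'
    have hsub : insert S (S.image S.erase) ⊆ S.powerset := by
      intro A hA
      rcases Finset.mem_insert.1 hA with rfl | hA
      · exact Finset.mem_powerset_self _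
      · obtain ⟨j, _, rfl⟩ := Finset.mem_image.1 hA
        exact Finset.mem_powerset.2 (Finset.erase_subset j S)
    have stepD : (∑ ω, (⋂ i ∈ S, E i t).indicator μ ω)
          + ∑ j ∈ S, m j t * (∑ ω, ((⋂ i ∈ S.erase j, E i t) ∩ (E j t)ᶜ).indicator μ ω)
        ≤ ∑ A ∈ S.powerset, (∏ i ∈ S \ A, m i t)
            * ∑ ω, ((⋂ i ∈ A, E i t) ∩ ⋂ i ∈ (S \ A : Finset ι), (E i t)ᶜ).indicator μ ω := by
      have heq : (∑ ω, (⋂ i ∈ S, E i t).indicator μ ω)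
            + ∑ j ∈ S, m j t * (∑ ω, ((⋂ i ∈ S.erase j, E i t) ∩ (E j t)ᶜ).indicator μ ω)
          = ∑ A ∈ insert S (S.image S.erase), (∏ i ∈ S \ A, m i t)
              * ∑ ω, ((⋂ i ∈ A, E i t) ∩ ⋂ i ∈ (S \ A : Finset ι), (E i t)ᶜ).indicator μ ω := by
        rw [Finset.sum_insert hSnotmem, Finset.sum_image hinj, hRS,
          Finset.sdiff_self, Finset.prod_empty, one_mul]
        congr 1
        refine Finset.sum_congr rfl fun j hj => ?_
        rw [hmerase j hj, hRerase j hj]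
      rw [heq]
      refine Finset.sum_le_sum_of_subset_of_nonneg hsub fun A _ _ => ?_
      exact mul_nonneg (Finset.prod_nonneg fun i _ => hm0 i t) (Pnn _)
    -- step E : combinatorial identity
    have key : ∀ ω : Ω,
        (∑ A ∈ S.powerset, (∏ i ∈ S \ A, m i t)
            * ((⋂ i ∈ A, E i t) ∩ ⋂ i ∈ (S \ A : Finset ι), (E i t)ᶜ).indicator μ ω)
          = ∑ A ∈ S.powerset, ((∏ i ∈ A, (1 - m i t)) * ∏ i ∈ S \ A, m i t)
              * (⋂ i ∈ A, E i t).indicator μ ω := by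
      intro ω
      set B : Finset ι := S.filter (fun i => ω ∈ E i t) with hB
      have hBS : B ⊆ S := Finset.filter_subset _ _
      have hLHS : (∑ A ∈ S.powerset, (∏ i ∈ S \ A, m i t)
            * ((⋂ i ∈ A, E i t) ∩ ⋂ i ∈ (S \ A : Finset ι), (E i t)ᶜ).indicator μ ω)
          = (∏ i ∈ S \ B, m i t) * μ ω := by
        rw [Finset.sum_eq_single B]
        · rw [Set.indicator_of_mem]
          constructor
          · exact (memI B t ω).2 fun i hi => (Finset.mem_filter.1 hi).2
          · simp only [Set.mem_iInter]
            intro i hi hc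
            have := Finset.mem_sdiff.1 hi
            exact this.2 (Finset.mem_filter.2 ⟨this.1, hc⟩)
        · intro A hA hAB
          rw [Set.indicator_of_notMem, mul_zero]
          intro hmem
          apply hAB
          apply Finset.ext
          intro i
          constructor
          · intro hiA
            exact Finset.mem_filter.2
              ⟨Finset.mem_powerset.1 hA hiA, (memI A t ω).1 hmem.1 i hiA⟩
          · intro hiB
            by_contra hiA
            have hiSA : i ∈ S \ A := Finset.mem_sdiff.2 ⟨(Finset.mem_filter.1 hiB).1, hiA⟩
            have h2 := hmem.2
            simp only [Set.mem_iInter] at h2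
            exact h2 i hiSA (Finset.mem_filter.1 hiB).2
        · intro h
          exact absurd (Finset.mem_powerset.2 hBS) h
      rw [hLHS]
      have hiffQ : ∀ A ∈ S.powerset, (ω ∈ ⋂ i ∈ A, E i t) ↔ A ⊆ B := by
        intro A hA
        constructor
        · intro h i hi
          exact Finset.mem_filter.2 ⟨Finset.mem_powerset.1 hA hi, (memI A t ω).1 h i hi⟩
        · intro h
          exact (memI A t ω).2 fun i hi => (Finset.mem_filter.1 (h hi)).2
      have h1 : (∑ A ∈ S.powerset, ((∏ i ∈ A, (1 - m i t)) * ∏ i ∈ S \ A, m i t)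
              * (⋂ i ∈ A, E i t).indicator μ ω)
          = ∑ A ∈ S.powerset, if A ⊆ B then
              ((∏ i ∈ A, (1 - m i t)) * ∏ i ∈ S \ A, m i t) * μ ω else 0 := by
        refine Finset.sum_congr rfl fun A hA => ?_
        by_cases h : A ⊆ B
        · rw [Set.indicator_of_mem ((hiffQ A hA).2 h), if_pos h]
        · rw [Set.indicator_of_notMem (fun hc => h ((hiffQ A hA).1 hc)), if_neg h, mul_zero]
      rw [h1, ← Finset.sum_filter]
      have h2 : S.powerset.filter (fun A => A ⊆ B) = B.powerset := by
        ext A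
        simp only [Finset.mem_filter, Finset.mem_powerset]
        exact ⟨fun h => h.2, fun h => ⟨h.trans hBS, h⟩⟩
      rw [h2]
      have hsplit : ∀ A ∈ B.powerset, (∏ i ∈ S \ A, m i t)
          = (∏ i ∈ B \ A, m i t) * ∏ i ∈ S \ B, m i t := by
        intro A hA
        have hAB : A ⊆ B := Finset.mem_powerset.1 hA
        rw [← Finset.prod_union]
        · congr 1
          rw [Finset.union_comm, Finset.sdiff_union_sdiff_cancel hBS hAB]
        · rw [Finset.disjoint_left]
          intro i hi hi'
          exact (Finset.mem_sdiff.1 hi').2 (Finset.mem_sdiff.1 hi).1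
      have h3 : (∑ A ∈ B.powerset, ((∏ i ∈ A, (1 - m i t)) * ∏ i ∈ S \ A, m i t) * μ ω)
          = (∑ A ∈ B.powerset, (∏ i ∈ A, (1 - m i t)) * ∏ i ∈ B \ A, m i t)
              * ((∏ i ∈ S \ B, m i t) * μ ω) := by
        rw [Finset.sum_mul]
        refine Finset.sum_congr rfl fun A hA => ?_
        rw [hsplit A hA]
        ring
      rw [h3, ← Finset.prod_add]
      simp
    have stepE : (∑ A ∈ S.powerset, (∏ i ∈ S \ A, m i t)
            * ∑ ω, ((⋂ i ∈ A, E i t) ∩ ⋂ i ∈ (S \ A : Finset ι), (E i t)ᶜ).indicator μ ω)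
        = ∑ A ∈ S.powerset, ((∏ i ∈ A, (1 - m i t)) * ∏ i ∈ S \ A, m i t)
            * ∑ ω, (⋂ i ∈ A, E i t).indicator μ ω := by
      calc (∑ A ∈ S.powerset, (∏ i ∈ S \ A, m i t)
              * ∑ ω, ((⋂ i ∈ A, E i t) ∩ ⋂ i ∈ (S \ A : Finset ι), (E i t)ᶜ).indicator μ ω)
          = ∑ ω, ∑ A ∈ S.powerset, (∏ i ∈ S \ A, m i t)
              * ((⋂ i ∈ A, E i t) ∩ ⋂ i ∈ (S \ A : Finset ι), (E i t)ᶜ).indicator μ ω := by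
            simp only [Finset.mul_sum]
            exact Finset.sum_comm
        _ = ∑ ω, ∑ A ∈ S.powerset, ((∏ i ∈ A, (1 - m i t)) * ∏ i ∈ S \ A, m i t)
              * (⋂ i ∈ A, E i t).indicator μ ω :=
            Finset.sum_congr rfl fun ω _ => key ω
        _ = ∑ A ∈ S.powerset, ((∏ i ∈ A, (1 - m i t)) * ∏ i ∈ S \ A, m i t)
              * ∑ ω, (⋂ i ∈ A, E i t).indicator μ ω := by
            simp only [Finset.mul_sum]
            exact Finset.sum_comm
    -- step F : apply IH
    have stepF : (∑ A ∈ S.powerset, ((∏ i ∈ A, (1 - m i t)) * ∏ i ∈ S \ A, m i t)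
            * ∑ ω, (⋂ i ∈ A, E i t).indicator μ ω)
        ≤ ∑ A ∈ S.powerset, ((∏ i ∈ A, (1 - m i t)) * ∏ i ∈ S \ A, m i t)
            * ∏ i ∈ A, shat i t := by
      refine Finset.sum_le_sum fun A _ => ?_
      refine mul_le_mul_of_nonneg_left ?_ ?_
      · rw [← bridge A t]
        exact IH A
      · exact mul_nonneg (Finset.prod_nonneg fun i _ => by linarith [hm1 i t])
          (Finset.prod_nonneg fun i _ => hm0 i t)
    -- step G : final product identity
    have stepG : (∑ A ∈ S.powerset, ((∏ i ∈ A, (1 - m i t)) * ∏ i ∈ S \ A, m i t)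
            * ∏ i ∈ A, shat i t)
        = ∏ i ∈ S, shat i (t + 1) := by
      have h1 : ∀ A ∈ S.powerset, ((∏ i ∈ A, (1 - m i t)) * ∏ i ∈ S \ A, m i t)
            * ∏ i ∈ A, shat i t
          = (∏ i ∈ A, shat i t * (1 - m i t)) * ∏ i ∈ S \ A, m i t := by
        intro A _
        rw [Finset.prod_mul_distrib]
        ring
      rw [Finset.sum_congr rfl h1, ← Finset.prod_add]
      refine Finset.prod_congr rfl fun i _ => ?_
      exact (hshatrec i t ht).symm
    calc (∑ ω, (⋂ i ∈ S, E i (t+1)).indicator μ ω)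
        = (∑ ω, (⋂ i ∈ S, E i t).indicator μ ω)
          + ∑ j ∈ S, ∑ ω,
              (((⋂ i ∈ S.erase j, E i t) ∩ (E j t)ᶜ) ∩ E j (t+1)).indicator μ ω := decomp
      _ ≤ (∑ ω, (⋂ i ∈ S, E i t).indicator μ ω)
          + ∑ j ∈ S, m j t * (∑ ω, ((⋂ i ∈ S.erase j, E i t) ∩ (E j t)ᶜ).indicator μ ω) := by
          gcongr with j hj
          exact condj j hj
      _ ≤ ∑ A ∈ S.powerset, (∏ i ∈ S \ A, m i t)
            * ∑ ω, ((⋂ i ∈ A, E i t) ∩ ⋂ i ∈ (S \ A : Finset ι), (E i t)ᶜ).indicator μ ω := stepD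
      _ = ∑ A ∈ S.powerset, ((∏ i ∈ A, (1 - m i t)) * ∏ i ∈ S \ A, m i t)
            * ∑ ω, (⋂ i ∈ A, E i t).indicator μ ω := stepE
      _ ≤ ∑ A ∈ S.powerset, ((∏ i ∈ A, (1 - m i t)) * ∏ i ∈ S \ A, m i t)
            * ∏ i ∈ A, shat i t := stepF
      _ = ∏ i ∈ S, shat i (t + 1) := stepG
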